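/- Let K be a commutative ring, A a unital K-algebra, Δ ∈ A a well-tempered element, and B = Â_Δ the unital homotope. Regard A as a left B-module via ψ₁. Then the map A → Hom_B(A, B), sending a ∈ A to the composite of right multiplication by a, R_a : A → A = B⁺, with the inclusion B⁺ ↪ B, is an isomorphism of left A-modules, where the left A-module structure on Hom_B(A, B) is given by (x·φ)(a') = φ(a'·x). -/

import Mathlib

open scoped TensorProduct

noncomputable section

universe u v

/-! ### The homotope of an algebra at an element -/

variable (K : Type v) [CommRing K] (A : Type u) [Ring A] [Algebra K A]

/-- The (non-unital) homotope of a ring `A` at an element `Δ`: the same underlying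
additive group, with multiplication `a ∘ b = a * Δ * b`. -/
@[ext]
structure Homotope {A : Type u} [Ring A] (Δ : A) : Type u where
  /-- the underlying element of `A` -/
  val : A

namespace Homotope

variable {A} (Δ : A)

theorem val_injective : Function.Injective (Homotope.val (Δ := Δ)) := fun a b h => by
  cases a; cases b; cases h; rfl

instance : Zero (Homotope Δ) := ⟨⟨0⟩⟩
instance : Add (Homotope Δ) := ⟨fun x y => ⟨x.val + y.val⟩⟩
instance : Neg (Homotope Δ) := ⟨fun x => ⟨-x.val⟩⟩
instance : Sub (Homotope Δ) := ⟨fun x y => ⟨x.val - y.val⟩⟩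
instance : SMul ℕ (Homotope Δ) := ⟨fun n x => ⟨n • x.val⟩⟩
instance : SMul ℤ (Homotope Δ) := ⟨fun n x => ⟨n • x.val⟩⟩
instance : Mul (Homotope Δ) := ⟨fun x y => ⟨x.val * Δ * y.val⟩⟩
instance : SMul K (Homotope Δ) := ⟨fun k x => ⟨k • x.val⟩⟩

@[simp] theorem zero_val : (0 : Homotope Δ).val = 0 := rfl
@[simp] theorem add_val (x y : Homotope Δ) : (x + y).val = x.val + y.val := rfl
@[simp] theorem neg_val (x : Homotope Δ) : (-x).val = -x.val := rfl
@[simp] theorem sub_val (x y : Homotope Δ) : (x - y).val = x.val - y.val := rfl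
@[simp] theorem mul_val (x y : Homotope Δ) : (x * y).val = x.val * Δ * y.val := rfl
@[simp] theorem smul_val (k : K) (x : Homotope Δ) : (k • x).val = k • x.val := rfl

instance : AddCommGroup (Homotope Δ) :=
  (val_injective Δ).addCommGroup Homotope.val rfl (fun _ _ => rfl) (fun _ => rfl)
    (fun _ _ => rfl) (fun _ _ => rfl) (fun _ _ => rfl)

instance : NonUnitalRing (Homotope Δ) :=
  { (inferInstance : AddCommGroup (Homotope Δ)),
    (inferInstance : Mul (Homotope Δ)) with
    left_distrib := fun x y z => by ext; simp [mul_add]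
    right_distrib := fun x y z => by ext; simp [add_mul]
    zero_mul := fun x => by ext; simp
    mul_zero := fun x => by ext; simp
    mul_assoc := fun x y z => by ext; simp [mul_assoc] }

/-- the projection to `A` as an additive map -/
def valAddHom : Homotope Δ →+ A :=
  { toFun := Homotope.val, map_zero' := rfl, map_add' := fun _ _ => rfl }

instance : Module K (Homotope Δ) :=
  (val_injective Δ).module K (valAddHom Δ) (fun _ _ => rfl)

instance : IsScalarTower K (Homotope Δ) (Homotope Δ) :=
  ⟨fun k x y => by ext; simp [smul_mul_assoc]⟩

instance : SMulCommClass K (Homotope Δ) (Homotope Δ) :=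
  ⟨fun k x y => by ext; simp [mul_smul_comm]⟩

end Homotope

/-- The unital homotope of `A` at `Δ`, obtained from the non-unital homotope by
adjoining a unit: `B = K·1 ⊕ A_Δ`. -/
abbrev UnitalHomotope (Δ : A) : Type _ := Unitization K (Homotope Δ)

namespace UnitalHomotope

variable (Δ : A)

/-- The non-unital algebra map `A_Δ → A`, `a ↦ a·Δ`. -/
def phi1 : Homotope Δ →ₙₐ[K] A :=
  { toFun := fun x => x.val * Δ
    map_smul' := fun k x => smul_mul_assoc k x.val Δ
    map_zero' := zero_mul Δ
    map_add' := fun x y => add_mul x.val y.val Δ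
    map_mul' := fun x y => mul_assoc (x.val * Δ) y.val Δ }

/-- The non-unital algebra map `A_Δ → A`, `a ↦ Δ·a`. -/
def phi2 : Homotope Δ →ₙₐ[K] A :=
  { toFun := fun x => Δ * x.val
    map_smul' := fun k x => mul_smul_comm k Δ x.val
    map_zero' := mul_zero Δ
    map_add' := fun x y => mul_add Δ x.val y.val
    map_mul' := fun x y => by
      show Δ * (x.val * Δ * y.val) = Δ * x.val * (Δ * y.val)
      simp [mul_assoc] }

/-- The algebra homomorphism `ψ₁ : B → A`, determined by `a ↦ a·Δ` on `B⁺ = A`. -/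
def psi1 : UnitalHomotope K A Δ →ₐ[K] A := Unitization.lift (phi1 K A Δ)

/-- The algebra homomorphism `ψ₂ : B → A`, determined by `a ↦ Δ·a` on `B⁺ = A`. -/
def psi2 : UnitalHomotope K A Δ →ₐ[K] A := Unitization.lift (phi2 K A Δ)

/-- The augmentation `B → K` of the unital homotope. -/
def aug : UnitalHomotope K A Δ →ₐ[K] K := Unitization.fstHom K (Homotope Δ)

/-- The augmentation ideal `B⁺ ⊆ B`, as a left ideal (hence a left `B`-module). -/
def plusLeft : Ideal (UnitalHomotope K A Δ) := RingHom.ker (aug K A Δ).toRingHom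

/-- The augmentation, as a ring homomorphism on the opposite algebra. -/
def augOp : (UnitalHomotope K A Δ)ᵐᵒᵖ →+* K :=
  RingHom.fromOpposite (aug K A Δ).toRingHom (fun x y => Commute.all _ _)

/-- The augmentation ideal `B⁺`, as a left ideal of `Bᵐᵒᵖ`, i.e. as a right `B`-module. -/
def plusRight : Ideal (UnitalHomotope K A Δ)ᵐᵒᵖ := RingHom.ker (augOp K A Δ)

end UnitalHomotope

open UnitalHomotope

/-- An element `Δ` of a `K`-algebra `A` is *well-tempered* if the two-sided ideal
generated by `Δ` is all of `A`, and the augmentation ideal `B⁺` of the unital homotope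
`B = Â_Δ` is projective both as a left and as a right `B`-module. -/
def WellTempered (Δ : A) : Prop :=
  TwoSidedIdeal.span ({Δ} : Set A) = ⊤ ∧
    Module.Projective (UnitalHomotope K A Δ) (plusLeft K A Δ) ∧
    Module.Projective (UnitalHomotope K A Δ)ᵐᵒᵖ (plusRight K A Δ)

namespace UnitalHomotope

variable {A} (Δ : A)

/-- `A` as a left module over the unital homotope `B = Â_Δ`, via `ψ₁`. -/
instance instModulePsi1 : Module (UnitalHomotope K A Δ) A :=
  Module.compHom A (psi1 K A Δ).toRingHom

theorem smul_def (b : UnitalHomotope K A Δ) (a : A) : b • a = psi1 K A Δ b * a := rfl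

instance : SMulCommClass (UnitalHomotope K A Δ) K A :=
  ⟨fun b k a => mul_smul_comm k (psi1 K A Δ b) a⟩

instance : SMulCommClass K (UnitalHomotope K A Δ) A :=
  ⟨fun k b a => (mul_smul_comm k (psi1 K A Δ b) a).symm⟩

instance : IsScalarTower K (UnitalHomotope K A Δ) A :=
  ⟨fun k b a => by
    rw [smul_def, smul_def, map_smul, smul_mul_assoc]⟩

end UnitalHomotope

end


open UnitalHomotope in
/-- If `Δ` is well-tempered and `A` is regarded as a left `B`-module via
`ψ₁`, then the map `A → Hom_B(A, B)` sending `a` to (right multiplication by `a` : `A → B⁺ ⊆ B`)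
is an isomorphism of left `A`-modules, where `A` acts on `Hom_B(A, B)` by
`(x·φ)(a') = φ(a'·x)`. -/
theorem hom_to_b_iso {K : Type v} [CommRing K] {A : Type u} [Ring A] [Algebra K A]
    (Δ : A) (h : WellTempered K A Δ) :
    ∃ e : A ≃ₗ[K] (A →ₗ[UnitalHomotope K A Δ] UnitalHomotope K A Δ),
      (∀ a y : A, e a y = Unitization.inr (⟨y * a⟩ : Homotope Δ)) ∧
      (∀ x a y : A, e (x * a) y = e a (y * x)) := by
  classical
  set B := UnitalHomotope K A Δ with hB
  have hpsi : ∀ b : B, psi1 K A Δ b = algebraMap K A b.fst + b.snd.val * Δ := by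
    intro b
    simp [psi1, Unitization.lift_apply, NonUnitalAlgHom.toAlgHom_apply, phi1]
  have hinr : ∀ {p q : A}, p = q →
      (Unitization.inr (⟨p⟩ : Homotope Δ) : B) = Unitization.inr (⟨q⟩ : Homotope Δ) := by
    intro p q hpq; rw [hpq]
  -- multiplication of `inr z` by a general element, on both sides
  have hmulL : ∀ (z : Homotope Δ) (b : B),
      (Unitization.inr z : B) * b = Unitization.inr (b.fst • z + z * b.snd) := by
    intro z b
    conv_lhs => rw [← Unitization.inl_fst_add_inr_snd_eq b]
    rw [mul_add, Unitization.inr_mul_inl, ← Unitization.inr_mul, ← Unitization.inr_add]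
  have hmulR : ∀ (z : Homotope Δ) (b : B),
      b * (Unitization.inr z : B) = Unitization.inr (b.fst • z + b.snd * z) := by
    intro z b
    conv_lhs => rw [← Unitization.inl_fst_add_inr_snd_eq b]
    rw [add_mul, Unitization.inl_mul_inr, ← Unitization.inr_mul, ← Unitization.inr_add]
  -- the basic map for a fixed `a`
  have Fdef : ∀ a : A, ∃ f : A →ₗ[B] B,
      ∀ y : A, f y = Unitization.inr (⟨y * a⟩ : Homotope Δ) := by
    intro a
    refine ⟨{ toFun := fun y => Unitization.inr (⟨y * a⟩ : Homotope Δ)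
              map_add' := fun x y => by
                rw [← Unitization.inr_add]
                exact hinr (add_mul x y a)
              map_smul' := fun b y => by
                show Unitization.inr (⟨(b • y) * a⟩ : Homotope Δ)
                  = b * Unitization.inr (⟨y * a⟩ : Homotope Δ)
                rw [hmulR]
                refine hinr ?_
                show (psi1 K A Δ b * y) * a
                  = b.fst • (y * a) + b.snd.val * Δ * (y * a)
                rw [hpsi]
                simp [Algebra.smul_def, add_mul, mul_assoc] }, fun y => rfl⟩
  choose F hF using Fdef
  -- surjectivity
  have hsurj : ∀ φ : A →ₗ[B] B, ∃ a : A, ∀ y : A,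
      φ y = Unitization.inr (⟨y * a⟩ : Homotope Δ) := by
    intro φ
    have key : ∀ x v y : A,
        φ (y * (x * Δ * v)) = Unitization.inr
          (⟨y * ((φ v).fst • x + x * Δ * (φ v).snd.val)⟩ : Homotope Δ) := by
      intro x v y
      have h1 : y * (x * Δ * v) = (Unitization.inr (⟨y * x⟩ : Homotope Δ) : B) • v := by
        rw [smul_def, hpsi]
        simp [mul_assoc]
      rw [h1, map_smul]
      show (Unitization.inr (⟨y * x⟩ : Homotope Δ) : B) * φ v = _
      rw [hmulL]
      congr 1
      ext
      show (φ v).fst • (y * x) + (y * x) * Δ * (φ v).snd.val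
        = y * ((φ v).fst • x + x * Δ * (φ v).snd.val)
      simp [mul_add, mul_smul_comm, mul_assoc]
    set G : Set A := {a : A | ∃ x v : A, a = x * Δ * v} with hG
    have hright : ∀ z ∈ Ideal.span G, ∀ r : A, z * r ∈ Ideal.span G := by
      intro z hz
      induction hz using Submodule.span_induction with
      | mem w hw =>
        intro r
        obtain ⟨x, v, rfl⟩ := hw
        exact Ideal.subset_span ⟨x, v * r, by rw [mul_assoc]⟩
      | zero => intro r; simp
      | add w₁ w₂ _ _ ih₁ ih₂ => intro r; rw [add_mul]; exact add_mem (ih₁ r) (ih₂ r)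
      | smul c w _ ih => intro r; rw [smul_eq_mul, mul_assoc]; exact Ideal.mul_mem_left _ _ (ih r)
    let I : TwoSidedIdeal A := TwoSidedIdeal.mk' (Ideal.span G)
      (zero_mem _) (fun hx hy => add_mem hx hy) (fun hx => neg_mem hx)
      (fun hy => Ideal.mul_mem_left _ _ hy) (fun {x y} hx => hright x hx y)
    have hΔI : ({Δ} : Set A) ⊆ I := by
      intro t ht
      rw [Set.mem_singleton_iff] at ht
      subst ht
      rw [SetLike.mem_coe, TwoSidedIdeal.mem_mk']
      exact Ideal.subset_span ⟨1, 1, by simp⟩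
    have hone : (1 : A) ∈ Ideal.span G := by
      have h1 : (1 : A) ∈ TwoSidedIdeal.span ({Δ} : Set A) := by
        rw [h.1]; trivial
      have := TwoSidedIdeal.mem_span_iff.mp h1 I hΔI
      rwa [TwoSidedIdeal.mem_mk'] at this
    have main : ∀ z ∈ Ideal.span G, ∃ a : A, ∀ y : A,
        φ (y * z) = Unitization.inr (⟨y * a⟩ : Homotope Δ) := by
      intro z hz
      induction hz using Submodule.span_induction with
      | mem w hw =>
        obtain ⟨x, v, rfl⟩ := hw
        exact ⟨(φ v).fst • x + x * Δ * (φ v).snd.val, fun y => key x v y⟩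
      | zero =>
        refine ⟨0, fun y => ?_⟩
        rw [mul_zero, map_zero]
        exact (Unitization.inr_zero K).symm
      | add w₁ w₂ _ _ ih₁ ih₂ =>
        obtain ⟨a₁, ha₁⟩ := ih₁
        obtain ⟨a₂, ha₂⟩ := ih₂
        refine ⟨a₁ + a₂, fun y => ?_⟩
        rw [mul_add, map_add, ha₁, ha₂, ← Unitization.inr_add]
        exact (hinr (mul_add y a₁ a₂)).symm
      | smul c w _ ih =>
        obtain ⟨a, ha⟩ := ih
        refine ⟨c * a, fun y => ?_⟩
        rw [smul_eq_mul, ← mul_assoc, ha (y * c)]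
        exact hinr (mul_assoc y c a)
    obtain ⟨a, ha⟩ := main 1 hone
    exact ⟨a, fun y => by simpa using ha y⟩
  -- package into a `K`-linear map
  have hzero : (0 : Homotope Δ) = (⟨0⟩ : Homotope Δ) := rfl
  let Flin : A →ₗ[K] (A →ₗ[B] B) :=
    { toFun := F
      map_add' := fun a b => LinearMap.ext fun y => by
        rw [LinearMap.add_apply, hF, hF, hF, ← Unitization.inr_add]
        exact hinr (mul_add y a b)
      map_smul' := fun k a => LinearMap.ext fun y => by
        rw [RingHom.id_apply, LinearMap.smul_apply, hF, hF, ← Unitization.inr_smul]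
        exact hinr (mul_smul_comm k y a) }
  have hbij : Function.Bijective Flin := by
    constructor
    · intro a b hab
      have h1 : F a 1 = F b 1 := by
        show Flin a 1 = Flin b 1
        rw [hab]
      rw [hF, hF] at h1
      have h2 := congrArg (fun x : B => x.snd) h1
      rw [Unitization.snd_inr, Unitization.snd_inr] at h2
      simpa using congrArg Homotope.val h2
    · intro φ
      obtain ⟨a, ha⟩ := hsurj φ
      refine ⟨a, LinearMap.ext fun y => ?_⟩
      rw [show Flin a = F a from rfl, hF, ha]
  refine ⟨LinearEquiv.ofBijective Flin hbij, fun a y => hF a y, fun x a y => ?_⟩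
  show F (x * a) y = F a (y * x)
  rw [hF, hF]
  exact hinr (mul_assoc y x a).symm
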